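/- Let A be a self-adjoint linear operator on E, D any linear operator on E, and w ∈ E a unit vector with ⟨w, A w⟩ = 0 and ⟨w, D w⟩ real. Set L := (−i) • A + D. Then the variance decomposes as (‖L w‖² − |⟨w, L w⟩|² : ℂ) = ‖A w‖² + (‖D w‖² − |⟨w, D w⟩|²) + Complex.I·(⟨A w, D w⟩ − ⟨D w, A w⟩); in particular the last (cross) term is real. -/

import Mathlib

/-- Speed decomposition (Eq. (5) of the paper): writing `L = −i A + D` with `A` Hermitian
(`⟨A⟩ = 0` in the state) and `D` the dissipative part (with real expectation), the variance
decomposes as `ΔL² = ΔA² + ΔD² + i (⟨A w, D w⟩ − ⟨D w, A w⟩)`, and the cross term is real. -/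
theorem speed_decomposition_unitary_dissipative
    {E : Type*} [NormedAddCommGroup E] [InnerProductSpace ℂ E] [FiniteDimensional ℂ E]
    (A D : E →ₗ[ℂ] E) (hA : LinearMap.IsSymmetric A)
    (w : E) (hw : ‖w‖ = 1)
    (hAw : (inner ℂ w (A w) : ℂ) = 0) (hDw : (inner ℂ w (D w) : ℂ).im = 0) :
    ((‖((-Complex.I) • A + D) w‖ ^ 2 -
        ‖(inner ℂ w (((-Complex.I) • A + D) w) : ℂ)‖ ^ 2 : ℝ) : ℂ) =
      ((‖A w‖ ^ 2 : ℝ) : ℂ) + ((‖D w‖ ^ 2 - ‖(inner ℂ w (D w) : ℂ)‖ ^ 2 : ℝ) : ℂ) +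
        Complex.I * ((inner ℂ (A w) (D w) : ℂ) - (inner ℂ (D w) (A w) : ℂ)) ∧
    (Complex.I * ((inner ℂ (A w) (D w) : ℂ) - (inner ℂ (D w) (A w) : ℂ))).im = 0 := by
  have hLw : ((-Complex.I) • A + D) w = (-Complex.I) • (A w) + D w := by
    simp
  have hda : (inner ℂ (D w) (A w) : ℂ) = starRingEnd ℂ (inner ℂ (A w) (D w) : ℂ) :=
    (inner_conj_symm (𝕜 := ℂ) (D w) (A w)).symm
  have him : (Complex.I * ((inner ℂ (A w) (D w) : ℂ) - (inner ℂ (D w) (A w) : ℂ))).im = 0 := by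
    rw [hda]
    set z := (inner ℂ (A w) (D w) : ℂ)
    simp [Complex.ext_iff, Complex.mul_im, Complex.sub_im, Complex.conj_im]
  refine ⟨?_, him⟩
  have hexp : (inner ℂ w (((-Complex.I) • A + D) w) : ℂ) = inner ℂ w (D w) := by
    rw [hLw, inner_add_right, inner_smul_right, hAw]
    ring
  have hnorm : ((‖((-Complex.I) • A + D) w‖ ^ 2 : ℝ) : ℂ)
      = ((‖A w‖ ^ 2 : ℝ) : ℂ) + ((‖D w‖ ^ 2 : ℝ) : ℂ)
        + Complex.I * ((inner ℂ (A w) (D w) : ℂ) - (inner ℂ (D w) (A w) : ℂ)) := by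
    have h1 : ∀ x : E, ((‖x‖ ^ 2 : ℝ) : ℂ) = inner ℂ x x := by
      intro x
      rw [inner_self_eq_norm_sq_to_K]
      norm_cast
    rw [h1, h1, h1, hLw]
    rw [inner_add_add_self]
    rw [inner_smul_left, inner_smul_right, inner_smul_left, inner_smul_right]
    rw [hda]
    simp only [map_neg, Complex.conj_I]
    linear_combination (-(inner ℂ (A w) (A w) : ℂ)) * Complex.I_sq
  push_cast [hexp, hnorm]
  push_cast [hexp] at hnorm ⊢
  ring_nf
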